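/- For any n ≥ 2, the complex 0 → S_{n−2} →^{(−g,f)ᵀ} S_{n−1} ⊕ S_{n−1} →^{(f g)} S_n →^ε R is acyclic and gives a minimal free resolution of Iⁿ, where S_d denotes the R-module of degree-d homogeneous polynomials in S = R[A,B,C], and ε substitutes a, b, c for A, B, C. -/

import Mathlib

open Polynomial in
/-- If `b` is a nonzerodivisor then `C a + C b * X` is a nonzerodivisor. -/
theorem nzd_linX {T : Type*} [CommRing T] {b : T} (hb : ∀ s : T, b * s = 0 → s = 0)
    (a : T) : ∀ q : T[X], (C a + C b * X) * q = 0 → q = 0 := by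
  intro q hq
  by_contra h0
  have h1 := congrArg (fun p => Polynomial.coeff p (q.natDegree + 1)) hq
  simp only [add_mul, coeff_add, coeff_C_mul, mul_assoc, coeff_X_mul, coeff_zero] at h1
  rw [coeff_eq_zero_of_natDegree_lt (by omega), mul_zero, zero_add] at h1
  exact h0 (leadingCoeff_eq_zero.mp (hb _ h1))

open Polynomial in
theorem nzd_CP {T : Type*} [CommRing T] {r : T} (hr : ∀ s : T, r * s = 0 → s = 0) :
    ∀ p : T[X], C r * p = 0 → p = 0 := by
  intro p hp
  ext i
  have := congrArg (fun u => Polynomial.coeff u i) hp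
  simp only [coeff_C_mul, coeff_zero] at this
  simpa using hr _ this

theorem nzd_CM {T : Type*} [CommRing T] {σ : Type*} {r : T} (hr : ∀ s : T, r * s = 0 → s = 0) :
    ∀ p : MvPolynomial σ T, MvPolynomial.C r * p = 0 → p = 0 := by
  intro p hp
  ext d
  have := congrArg (fun u => MvPolynomial.coeff d u) hp
  simp only [MvPolynomial.coeff_C_mul, MvPolynomial.coeff_zero] at this
  simpa using hr _ this

/-- Koszul property lifts from the ring to multivariate polynomials. -/
theorem pair_CM {T : Type*} [CommRing T] {σ : Type*} {u v : T}
    (hv : ∀ s : T, v * s = 0 → s = 0)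
    (hpair : ∀ r s : T, u * r = v * s → ∃ t, r = v * t ∧ s = u * t) :
    ∀ p q : MvPolynomial σ T, MvPolynomial.C u * p = MvPolynomial.C v * q →
      ∃ t, p = MvPolynomial.C v * t ∧ q = MvPolynomial.C u * t := by
  intro p q h
  have hdvd : MvPolynomial.C v ∣ p := by
    rw [MvPolynomial.C_dvd_iff_dvd_coeff]
    intro d
    have hd := congrArg (fun w => MvPolynomial.coeff d w) h
    simp only [MvPolynomial.coeff_C_mul] at hd
    obtain ⟨t, ht, -⟩ := hpair _ _ hd
    exact ⟨t, ht⟩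
  obtain ⟨t, ht⟩ := hdvd
  refine ⟨t, ht, ?_⟩
  have h2 : MvPolynomial.C v * (q - MvPolynomial.C u * t) = 0 := by
    have : MvPolynomial.C u * (MvPolynomial.C v * t) = MvPolynomial.C v * q := ht ▸ h
    linear_combination -this
  have := nzd_CM hv _ h2
  linear_combination this

section KPP
open Polynomial

private lemma koszul_coeff {T : Type*} [CommRing T] {u v f₀ g₀ : T} {p q : T[X]}
    (h : (C u * X + C f₀) * p + (C v * X + C g₀) * q = 0) (i : ℕ) :
    u * p.coeff i + f₀ * p.coeff (i+1) + v * q.coeff i + g₀ * q.coeff (i+1) = 0 := by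
  have h1 := congrArg (fun r => Polynomial.coeff r (i+1)) h
  simp only [coeff_add, add_mul, mul_assoc, coeff_C_mul, coeff_X_mul, coeff_zero] at h1
  linear_combination h1

/-- Koszul syzygies of the pair `(C u * X + C f₀, C v * X + C g₀)` are trivial. -/
theorem koszul_pair_poly {T : Type*} [CommRing T] {u v f₀ g₀ : T}
    (hu : ∀ s : T, u * s = 0 → s = 0) (hv : ∀ s : T, v * s = 0 → s = 0)
    (hpair : ∀ r s : T, u * r = v * s → ∃ t, r = v * t ∧ s = u * t)
    (hdet : ∀ s : T, (v * f₀ - u * g₀) * s = 0 → s = 0) :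
    ∀ (d : ℕ) (q p : T[X]), q.natDegree ≤ d →
      (C u * X + C f₀) * p + (C v * X + C g₀) * q = 0 →
      ∃ w, p = (C v * X + C g₀) * w ∧ q = -((C u * X + C f₀) * w) := by
  intro d
  induction d with
  | zero =>
    intro q p hq h
    by_cases hp0 : p = 0
    · subst hp0
      have hGq : (C g₀ + C v * X) * q = 0 := by linear_combination h
      have := nzd_linX hv g₀ q hGq
      exact ⟨0, by simp, by simp [this]⟩
    have hp : p.natDegree ≤ 0 := by
      by_contra hgt
      push_neg at hgt
      have E := koszul_coeff h p.natDegree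
      rw [coeff_eq_zero_of_natDegree_lt (by omega : p.natDegree < p.natDegree + 1),
        coeff_eq_zero_of_natDegree_lt (show q.natDegree < p.natDegree by omega),
        coeff_eq_zero_of_natDegree_lt (show q.natDegree < p.natDegree + 1 by omega)] at E
      have : u * p.leadingCoeff = 0 := by
        rw [Polynomial.leadingCoeff]; linear_combination E
      exact hp0 (leadingCoeff_eq_zero.mp (hu _ this))
    have E1 := koszul_coeff h 0
    rw [coeff_eq_zero_of_natDegree_lt (show p.natDegree < 0 + 1 by omega),
      coeff_eq_zero_of_natDegree_lt (show q.natDegree < 0 + 1 by omega)] at E1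
    have E1' : u * p.coeff 0 = v * (-(q.coeff 0)) := by linear_combination E1
    obtain ⟨t, ht1, ht2⟩ := hpair _ _ E1'
    have E0 := congrArg (fun r => Polynomial.coeff r 0) h
    simp only [mul_coeff_zero, coeff_add, coeff_C_mul, coeff_C, mul_coeff_zero,
      coeff_X_zero, mul_zero, coeff_zero, eq_self_iff_true, if_true] at E0
    have hq0 : q.coeff 0 = -(u * t) := by linear_combination -ht2
    have ht0 : (v * f₀ - u * g₀) * t = 0 := by
      rw [ht1, hq0] at E0
      linear_combination E0
    have t0 : t = 0 := hdet _ ht0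
    have hp' : p = C (p.coeff 0) := eq_C_of_natDegree_le_zero hp
    have hq' : q = C (q.coeff 0) := eq_C_of_natDegree_le_zero hq
    refine ⟨0, ?_, ?_⟩
    · rw [hp', ht1, t0, mul_zero, map_zero, mul_zero]
    · rw [hq', hq0, t0, mul_zero, neg_zero, map_zero, mul_zero, neg_zero]
  | succ d IH =>
    intro q p hq h
    by_cases hle : q.natDegree ≤ d
    · exact IH q p hle h
    by_cases hp0 : p = 0
    · subst hp0
      have hGq : (C g₀ + C v * X) * q = 0 := by linear_combination h
      have := nzd_linX hv g₀ q hGq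
      exact ⟨0, by simp, by simp [this]⟩
    have hp : p.natDegree ≤ d + 1 := by
      by_contra hgt
      push_neg at hgt
      have E := koszul_coeff h p.natDegree
      rw [coeff_eq_zero_of_natDegree_lt (by omega : p.natDegree < p.natDegree + 1),
        coeff_eq_zero_of_natDegree_lt (show q.natDegree < p.natDegree by omega),
        coeff_eq_zero_of_natDegree_lt (show q.natDegree < p.natDegree + 1 by omega)] at E
      have : u * p.leadingCoeff = 0 := by
        rw [Polynomial.leadingCoeff]; linear_combination E
      exact hp0 (leadingCoeff_eq_zero.mp (hu _ this))
    have E := koszul_coeff h (d+1)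
    rw [coeff_eq_zero_of_natDegree_lt (show p.natDegree < d + 1 + 1 by omega),
      coeff_eq_zero_of_natDegree_lt (show q.natDegree < d + 1 + 1 by omega)] at E
    have E' : u * p.coeff (d+1) = v * (-(q.coeff (d+1))) := by linear_combination E
    obtain ⟨t, ht1, ht2⟩ := hpair _ _ E'
    set F : T[X] := C u * X + C f₀ with hF
    set G : T[X] := C v * X + C g₀ with hG
    have hFh : F * (C t * X^d) = C (u*t) * X^(d+1) + C (f₀*t) * X^d := by
      rw [C_mul, C_mul, hF]; ring
    have hq' : (q + F * (C t * X^d)).natDegree ≤ d := by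
      rw [natDegree_le_iff_coeff_eq_zero]
      intro N hN
      rw [coeff_add, hFh, coeff_add, coeff_C_mul, coeff_C_mul, coeff_X_pow, coeff_X_pow]
      rcases eq_or_ne N (d+1) with rfl | hNe
      · rw [if_pos rfl, if_neg (by omega)]
        have : q.coeff (d+1) = -(u*t) := by linear_combination -ht2
        rw [this]; ring
      · rw [if_neg (by omega), if_neg (by omega),
          coeff_eq_zero_of_natDegree_lt (show q.natDegree < N by omega)]
        ring
    have hFG' : F * (p - G * (C t * X^d)) + G * (q + F * (C t * X^d)) = 0 := by
      rw [hF, hG] at h ⊢; linear_combination h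
    obtain ⟨w, hw1, hw2⟩ := IH _ _ hq' hFG'
    refine ⟨w + C t * X^d, by linear_combination hw1, by linear_combination hw2⟩

/-- Degenerate Koszul pair: first polynomial constant. -/
theorem koszul_pair_poly2 {T : Type*} [CommRing T] {F₀ v g₀ : T}
    (hF : ∀ s : T, F₀ * s = 0 → s = 0) (hv : ∀ s : T, v * s = 0 → s = 0)
    (hpair : ∀ r s : T, F₀ * r = v * s → ∃ t, r = v * t ∧ s = F₀ * t) :
    ∀ (d : ℕ) (q p : T[X]), q.natDegree ≤ d →
      C F₀ * p + (C v * X + C g₀) * q = 0 →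
      ∃ w, p = (C v * X + C g₀) * w ∧ q = -(C F₀ * w) := by
  have coeffE : ∀ (p q : T[X]), C F₀ * p + (C v * X + C g₀) * q = 0 → ∀ i,
      F₀ * p.coeff (i+1) + v * q.coeff i + g₀ * q.coeff (i+1) = 0 := by
    intro p q h i
    have h1 := congrArg (fun r => Polynomial.coeff r (i+1)) h
    simp only [coeff_add, add_mul, mul_assoc, coeff_C_mul, coeff_X_mul, coeff_zero] at h1
    linear_combination h1
  have pbound : ∀ (p q : T[X]), C F₀ * p + (C v * X + C g₀) * q = 0 →
      p.natDegree ≤ q.natDegree + 1 := by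
    intro p q h
    rw [natDegree_le_iff_coeff_eq_zero]
    intro N hN
    obtain ⟨j, rfl⟩ : ∃ j, N = j + 1 := ⟨N - 1, by omega⟩
    have E := coeffE p q h j
    rw [coeff_eq_zero_of_natDegree_lt (show q.natDegree < j by omega),
      coeff_eq_zero_of_natDegree_lt (show q.natDegree < j + 1 by omega)] at E
    exact hF _ (by linear_combination E)
  intro d
  induction d with
  | zero =>
    intro q p hq h
    have hp := pbound p q h
    have E := coeffE p q h 0
    rw [coeff_eq_zero_of_natDegree_lt (show q.natDegree < 0 + 1 by omega)] at E
    have E' : F₀ * p.coeff 1 = v * (-(q.coeff 0)) := by linear_combination E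
    obtain ⟨t, ht1, ht2⟩ := hpair _ _ E'
    have hq0 : q + C F₀ * C t = 0 := by
      ext i
      rcases Nat.eq_zero_or_pos i with rfl | hi
      · simp only [coeff_add, coeff_C_mul, coeff_C, eq_self_iff_true, if_true, coeff_zero]
        linear_combination -ht2
      · simp only [coeff_add, coeff_C_mul, coeff_C, if_neg (by omega : ¬ i = 0), mul_zero,
          coeff_zero, coeff_eq_zero_of_natDegree_lt (show q.natDegree < i by omega), add_zero]
    have hqv : q = -(C F₀ * C t) := by linear_combination hq0
    have hp0 : C F₀ * (p - (C v * X + C g₀) * C t) = 0 := by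
      rw [hqv] at h; linear_combination h
    have hp1 := nzd_CP hF _ hp0
    exact ⟨C t, by linear_combination hp1, hqv⟩
  | succ d IH =>
    intro q p hq h
    by_cases hle : q.natDegree ≤ d
    · exact IH q p hle h
    have hp := pbound p q h
    have E := coeffE p q h (d+1)
    rw [coeff_eq_zero_of_natDegree_lt (show q.natDegree < d + 1 + 1 by omega)] at E
    have E' : F₀ * p.coeff (d+1+1) = v * (-(q.coeff (d+1))) := by linear_combination E
    obtain ⟨t, ht1, ht2⟩ := hpair _ _ E'
    have hq' : (q + C F₀ * (C t * X^(d+1))).natDegree ≤ d := by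
      rw [natDegree_le_iff_coeff_eq_zero]
      intro N hN
      rw [coeff_add, ← mul_assoc, ← C_mul, coeff_C_mul, coeff_X_pow]
      rcases eq_or_ne N (d+1) with rfl | hNe
      · rw [if_pos rfl]
        have : q.coeff (d+1) = -(F₀*t) := by linear_combination -ht2
        rw [this]; ring
      · rw [if_neg (by omega),
          coeff_eq_zero_of_natDegree_lt (show q.natDegree < N by omega)]
        ring
    have hFG' : C F₀ * (p - (C v * X + C g₀) * (C t * X^(d+1)))
        + (C v * X + C g₀) * (q + C F₀ * (C t * X^(d+1))) = 0 := by
      linear_combination h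
    obtain ⟨w, hw1, hw2⟩ := IH _ _ hq' hFG'
    exact ⟨w + C t * X^(d+1), by linear_combination hw1, by linear_combination hw2⟩

end KPP

open IsLocalRing

lemma nzd_pow {R : Type*} [CommRing R] {r : R} (h : ∀ s : R, r * s = 0 → s = 0) :
    ∀ (k : ℕ) (s : R), r ^ k * s = 0 → s = 0 := by
  intro k
  induction k with
  | zero => intro s hs; simpa using hs
  | succ k IH =>
    intro s hs
    rw [pow_succ, mul_assoc] at hs
    exact h _ (IH _ (by linear_combination hs))

lemma quot_colon {R : Type*} [CommRing R] {N : Submodule R R} {v : R}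
    (hreg : IsSMulRegular (R ⧸ N) v) {s : R} (hs : v * s ∈ N) : s ∈ N := by
  have h0 : v • (Submodule.Quotient.mk s : R ⧸ N) = v • 0 := by
    rw [smul_zero, ← Submodule.Quotient.mk_smul]
    exact (Submodule.Quotient.mk_eq_zero N).mpr (by simpa [smul_eq_mul] using hs)
  have := hreg h0
  rwa [Submodule.Quotient.mk_eq_zero] at this

lemma rex {R : Type*} [CommRing R] {u v w : R}
    (h : RingTheory.Sequence.IsRegular R [u, v, w]) :
    (∀ s : R, u * s = 0 → s = 0) ∧
    (∀ s : R, v * s ∈ Ideal.span {u} → s ∈ Ideal.span {u}) ∧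
    (∀ s : R, w * s ∈ Ideal.span {u, v} → s ∈ Ideal.span {u, v}) := by
  have hw := h.toIsWeaklyRegular
  have h0 := hw.regular_mod_prev 0 (by norm_num)
  have h1 := hw.regular_mod_prev 1 (by norm_num)
  have h2 := hw.regular_mod_prev 2 (by norm_num)
  simp only [List.take, List.getElem_cons_zero, List.getElem_cons_succ] at h0 h1 h2
  have e0 : (Ideal.ofList ([] : List R) • ⊤ : Submodule R R) = ⊥ := by
    rw [Ideal.ofList_nil, Submodule.bot_smul]
  have e1 : (Ideal.ofList [u] • ⊤ : Submodule R R) = Ideal.span {u} := by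
    rw [Ideal.ofList_singleton, Ideal.smul_eq_mul, Ideal.mul_top]
  have e2 : (Ideal.ofList [u, v] • ⊤ : Submodule R R) = Ideal.span {u, v} := by
    have : Ideal.ofList [u, v] = Ideal.span {u, v} := by
      unfold Ideal.ofList
      congr 1
      ext t; simp
    rw [this, Ideal.smul_eq_mul, Ideal.mul_top]
  replace h0 : IsSMulRegular (R ⧸ (Ideal.ofList ([] : List R) • ⊤ : Submodule R R)) u := h0
  replace h1 : IsSMulRegular (R ⧸ (Ideal.ofList [u] • ⊤ : Submodule R R)) v := h1
  replace h2 : IsSMulRegular (R ⧸ (Ideal.ofList [u, v] • ⊤ : Submodule R R)) w := h2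
  rw [e0] at h0
  rw [e1] at h1
  rw [e2] at h2
  refine ⟨fun s hs => ?_, fun s hs => ?_, fun s hs => ?_⟩
  · have := quot_colon h0 (N := ⊥) (by simpa using hs)
    simpa using this
  · exact quot_colon h1 hs
  · exact quot_colon h2 hs

lemma rad_eq_max {R : Type*} [CommRing R] [IsLocalRing R] {x y z p q r : R}
    (hsop : (Ideal.span {x, y, z}).radical = maximalIdeal R)
    (hp : p ∈ maximalIdeal R) (hq : q ∈ maximalIdeal R) (hr : r ∈ maximalIdeal R)
    (hx : x ∈ (Ideal.span {p, q, r}).radical) (hy : y ∈ (Ideal.span {p, q, r}).radical)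
    (hz : z ∈ (Ideal.span {p, q, r}).radical) :
    (Ideal.span {p, q, r}).radical = maximalIdeal R := by
  apply le_antisymm
  · have h1 : Ideal.span {p, q, r} ≤ maximalIdeal R := by
      rw [Ideal.span_le]
      rintro t ht
      simp only [Set.mem_insert_iff, Set.mem_singleton_iff] at ht
      rcases ht with rfl | rfl | rfl <;> assumption
    have := Ideal.radical_mono h1
    rwa [((maximalIdeal.isMaximal R).isPrime).radical] at this
  · rw [← hsop]
    have h2 : Ideal.span {x, y, z} ≤ (Ideal.span {p, q, r}).radical := by
      rw [Ideal.span_le]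
      rintro t ht
      simp only [Set.mem_insert_iff, Set.mem_singleton_iff] at ht
      rcases ht with rfl | rfl | rfl <;> assumption
    have := Ideal.radical_mono h2
    rwa [Ideal.radical_idem] at this

open IsLocalRing

section Facts

variable {R : Type*} [CommRing R] [IsLocalRing R]
variable {x y z : R} {α β γ α' β' γ' : ℕ} {a b c : R}

-- membership in radical via a power in the span
private lemma mem_rad_of_pow {J : Ideal R} {t : R} {k : ℕ} (h : t ^ k ∈ J) :
    t ∈ J.radical := Ideal.mem_radical_of_pow_mem (J.le_radical h)

set_option maxHeartbeats 800000 in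
lemma all_facts
    (hCM : ∀ u v w : R, (Ideal.span {u, v, w}).radical = maximalIdeal R →
      RingTheory.Sequence.IsRegular R [u, v, w])
    (hsop : (Ideal.span {x, y, z}).radical = maximalIdeal R)
    (hα : 0 < α) (hβ : 0 < β) (hγ : 0 < γ)
    (hα' : 0 < α') (hβ' : 0 < β') (hγ' : 0 < γ')
    (ha : a = z ^ (γ + γ') - x ^ α' * y ^ β)
    (hb : b = x ^ (α + α') - y ^ β' * z ^ γ)
    (hc : c = y ^ (β + β') - x ^ α * z ^ γ') :
    (∀ s : R, x ^ α * s = 0 → s = 0) ∧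
    (∀ s : R, y ^ β * s ∈ Ideal.span {x ^ α} → s ∈ Ideal.span {x ^ α}) ∧
    (∀ s : R, y ^ β' * s ∈ Ideal.span {x ^ α} → s ∈ Ideal.span {x ^ α}) ∧
    (∀ s : R, z ^ γ * s ∈ Ideal.span {x ^ α, y ^ β'} → s ∈ Ideal.span {x ^ α, y ^ β'}) ∧
    (∀ s : R, y ^ β' * s = 0 → s = 0) ∧
    (∀ s : R, b * s = 0 → s = 0) ∧
    (∀ s : R, c * s = 0 → s = 0) ∧
    (∀ s : R, b * s ∈ Ideal.span {c} → s ∈ Ideal.span {c}) := by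
  have hxm : x ∈ maximalIdeal R := hsop ▸ Ideal.le_radical (Ideal.subset_span (by simp))
  have hym : y ∈ maximalIdeal R := hsop ▸ Ideal.le_radical (Ideal.subset_span (by simp))
  have hzm : z ∈ maximalIdeal R := hsop ▸ Ideal.le_radical (Ideal.subset_span (by simp))
  have hpowm : ∀ (t : R), t ∈ maximalIdeal R → ∀ k : ℕ, 0 < k → t ^ k ∈ maximalIdeal R := by
    intro t ht k hk
    have : t ^ k = t ^ (k - 1) * t := by
      rw [← pow_succ]; congr 1; omega
    rw [this]
    exact Ideal.mul_mem_left _ _ ht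
  have hbm : b ∈ maximalIdeal R := by
    rw [hb]
    exact sub_mem (hpowm x hxm _ (by omega)) (Ideal.mul_mem_left _ _ (hpowm z hzm _ hγ))
  have hcm : c ∈ maximalIdeal R := by
    rw [hc]
    exact sub_mem (hpowm y hym _ (by omega)) (Ideal.mul_mem_left _ _ (hpowm z hzm _ hγ'))
  -- powers of sop triples
  have powtriple : ∀ p q r : ℕ, 0 < p → 0 < q → 0 < r →
      (Ideal.span {x ^ p, y ^ q, z ^ r}).radical = maximalIdeal R := by
    intro p q r hp hq hr
    refine rad_eq_max hsop (hpowm x hxm _ hp) (hpowm y hym _ hq) (hpowm z hzm _ hr) ?_ ?_ ?_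
    · exact mem_rad_of_pow (k := p) (Ideal.subset_span (by simp))
    · exact mem_rad_of_pow (k := q) (Ideal.subset_span (by simp))
    · exact mem_rad_of_pow (k := r) (Ideal.subset_span (by simp))
  obtain ⟨A1, A2, -⟩ := rex (hCM _ _ _ (powtriple α β γ hα hβ hγ))
  obtain ⟨-, B2, B3⟩ := rex (hCM _ _ _ (powtriple α β' γ hα hβ' hγ))
  -- [y^β', x, z]
  have radC : (Ideal.span {y ^ β', x, z}).radical = maximalIdeal R := by
    refine rad_eq_max hsop (hpowm y hym _ hβ') hxm hzm ?_ ?_ ?_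
    · exact Ideal.le_radical (Ideal.subset_span (by simp))
    · exact mem_rad_of_pow (k := β') (Ideal.subset_span (by simp))
    · exact Ideal.le_radical (Ideal.subset_span (by simp))
  obtain ⟨C1, -, -⟩ := rex (hCM _ _ _ radC)
  -- triples involving b, c and z
  have hxmem : ∀ J : Ideal R, b ∈ J → z ∈ J → x ∈ J.radical := by
    intro J hbJ hzJ
    refine mem_rad_of_pow (k := α + α') ?_
    have : x ^ (α + α') = b + y ^ β' * (z ^ (γ - 1) * z) := by
      rw [hb]; rw [show z ^ (γ - 1) * z = z ^ γ by rw [← pow_succ]; congr 1; omega]; ring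
    rw [this]
    exact add_mem hbJ (Ideal.mul_mem_left _ _ (Ideal.mul_mem_left _ _ hzJ))
  have hymem : ∀ J : Ideal R, c ∈ J → z ∈ J → y ∈ J.radical := by
    intro J hcJ hzJ
    refine mem_rad_of_pow (k := β + β') ?_
    have : y ^ (β + β') = c + x ^ α * (z ^ (γ' - 1) * z) := by
      rw [hc]; rw [show z ^ (γ' - 1) * z = z ^ γ' by rw [← pow_succ]; congr 1; omega]; ring
    rw [this]
    exact add_mem hcJ (Ideal.mul_mem_left _ _ (Ideal.mul_mem_left _ _ hzJ))
  have radD : (Ideal.span {b, c, z}).radical = maximalIdeal R := by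
    refine rad_eq_max hsop hbm hcm hzm ?_ ?_ ?_
    · exact hxmem _ (Ideal.subset_span (by simp)) (Ideal.subset_span (by simp))
    · exact hymem _ (Ideal.subset_span (by simp)) (Ideal.subset_span (by simp))
    · exact Ideal.le_radical (Ideal.subset_span (by simp))
  obtain ⟨D1, -, -⟩ := rex (hCM _ _ _ radD)
  have radE : (Ideal.span {c, b, z}).radical = maximalIdeal R := by
    refine rad_eq_max hsop hcm hbm hzm ?_ ?_ ?_
    · exact hxmem _ (Ideal.subset_span (by simp)) (Ideal.subset_span (by simp))
    · exact hymem _ (Ideal.subset_span (by simp)) (Ideal.subset_span (by simp))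
    · exact Ideal.le_radical (Ideal.subset_span (by simp))
  obtain ⟨E1, E2, -⟩ := rex (hCM _ _ _ radE)
  exact ⟨A1, A2, B2, B3, C1, D1, E1, E2⟩

end Facts

section SEC5
open MvPolynomial

section Transfer

variable {R' : Type*} [CommRing R'] {k : ℕ}

lemma finSuccEquiv_rename_succ (t : MvPolynomial (Fin k) R') :
    MvPolynomial.finSuccEquiv R' k (rename Fin.succ t) = Polynomial.C t := by
  have : ((MvPolynomial.finSuccEquiv R' k).toAlgHom.comp (rename Fin.succ) :
      MvPolynomial (Fin k) R' →ₐ[R'] Polynomial (MvPolynomial (Fin k) R')) =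
      Polynomial.CAlgHom := by
    apply MvPolynomial.algHom_ext
    intro i
    simp [Polynomial.CAlgHom, finSuccEquiv_X_succ]
  exact DFunLike.congr_fun this t

lemma coeff_finSuccEquiv_of_lt {w : MvPolynomial (Fin (k+1)) R'} {n : ℕ}
    (hw : w.IsHomogeneous n) {i : ℕ} (hi : n < i) :
    (MvPolynomial.finSuccEquiv R' k w).coeff i = 0 := by
  ext m
  rw [finSuccEquiv_coeff_coeff, MvPolynomial.coeff_zero]
  by_contra hne
  have h2 := hw hne
  simp only [Finsupp.weight_apply, Pi.one_apply, smul_eq_mul, mul_one, Finsupp.sum_cons] at h2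
  omega

end Transfer

end SEC5

section SEC6
open MvPolynomial

section LinNzd

variable {S : Type*} [CommRing S]

lemma finSuccEquiv_C' {k : ℕ} (r : S) :
    MvPolynomial.finSuccEquiv S k (C r) = Polynomial.C (C r) := by
  have := finSuccEquiv_rename_succ (R' := S) (k := k) (C r)
  rwa [rename_C] at this

lemma finSuccEquiv_lin3 (w₀ w₁ w₂ : S) :
    MvPolynomial.finSuccEquiv S 2 (C w₀ * X 0 + C w₁ * X 1 + C w₂ * X 2) =
      Polynomial.C (C w₁ * X 0 + C w₂ * X 1) + Polynomial.C (C w₀) * Polynomial.X := by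
  rw [show (1 : Fin 3) = (0 : Fin 2).succ from rfl, show (2 : Fin 3) = (1 : Fin 2).succ from rfl]
  simp only [map_add, map_mul, finSuccEquiv_C', finSuccEquiv_X_zero, finSuccEquiv_X_succ]
  ring

lemma finSuccEquiv_lin2 (w₀ w₁ : S) :
    MvPolynomial.finSuccEquiv S 1 (C w₀ * X 0 + C w₁ * X 1) =
      Polynomial.C (C w₁ * X 0) + Polynomial.C (C w₀) * Polynomial.X := by
  rw [show (1 : Fin 2) = (0 : Fin 1).succ from rfl]
  simp only [map_add, map_mul, finSuccEquiv_C', finSuccEquiv_X_zero, finSuccEquiv_X_succ]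
  ring

/-- A linear form in two variables whose first coefficient is a nonzerodivisor
is a nonzerodivisor. -/
lemma nzd_lin2 {w₀ : S} (h : ∀ s : S, w₀ * s = 0 → s = 0) (w₁ : S) :
    ∀ p : MvPolynomial (Fin 2) S, (C w₀ * X 0 + C w₁ * X 1) * p = 0 → p = 0 := by
  intro p hp
  have h2 : MvPolynomial.finSuccEquiv S 1 ((C w₀ * X 0 + C w₁ * X 1) * p) = 0 := by rw [hp, map_zero]
  rw [map_mul, finSuccEquiv_lin2] at h2
  have h3 := nzd_linX (b := C w₀) (nzd_CM h) (C w₁ * X 0) _ h2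
  have := congrArg (MvPolynomial.finSuccEquiv S 1).symm h3
  simpa using this

lemma nzd_lin2' {w₁ : S} (h : ∀ s : S, w₁ * s = 0 → s = 0) (w₀ : S) :
    ∀ p : MvPolynomial (Fin 2) S, (C w₀ * X 0 + C w₁ * X 1) * p = 0 → p = 0 := by
  intro p hp
  have h2 : rename (Equiv.swap (0 : Fin 2) 1)
      ((C w₀ * X 0 + C w₁ * X 1) * p) = 0 := by rw [hp, map_zero]
  simp only [map_mul, map_add, rename_C, rename_X, Equiv.swap_apply_left,
    Equiv.swap_apply_right] at h2
  have h3 : (C w₁ * X 0 + C w₀ * X 1) * rename (Equiv.swap (0 : Fin 2) 1) p = 0 := by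
    linear_combination h2
  have h4 := nzd_lin2 h w₀ _ h3
  exact rename_injective _ (Equiv.swap (0 : Fin 2) 1).injective
    (h4.trans (map_zero (rename (Equiv.swap (0 : Fin 2) 1))).symm)

lemma nzd_lin3 {w₀ : S} (h : ∀ s : S, w₀ * s = 0 → s = 0) (w₁ w₂ : S) :
    ∀ p : MvPolynomial (Fin 3) S, (C w₀ * X 0 + C w₁ * X 1 + C w₂ * X 2) * p = 0 → p = 0 := by
  intro p hp
  have h2 : MvPolynomial.finSuccEquiv S 2 ((C w₀ * X 0 + C w₁ * X 1 + C w₂ * X 2) * p) = 0 := by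
    rw [hp, map_zero]
  rw [map_mul, finSuccEquiv_lin3] at h2
  have h3 := nzd_linX (b := C w₀) (nzd_CM h) (C w₁ * X 0 + C w₂ * X 1) _ h2
  have := congrArg (MvPolynomial.finSuccEquiv S 2).symm h3
  simpa using this

end LinNzd

end SEC6

section SEC7
open MvPolynomial

lemma nzd_quot {R : Type*} [CommRing R] {J : Ideal R} {t : R}
    (h : ∀ s : R, t * s ∈ J → s ∈ J) :
    ∀ s : R ⧸ J, (Ideal.Quotient.mk J t) * s = 0 → s = 0 := by
  intro s hs
  obtain ⟨s', rfl⟩ := Ideal.Quotient.mk_surjective s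
  rw [← map_mul, Ideal.Quotient.eq_zero_iff_mem] at hs
  rw [Ideal.Quotient.eq_zero_iff_mem]
  exact h s' hs

/-- Koszul syzygies between two linear forms in three variables are trivial, provided
the first coefficients form a "Koszul pair" and the formal determinant form is a
nonzerodivisor. -/
lemma koszul_M3 {S : Type*} [CommRing S] {u v f1 f2 g1 g2 : S}
    (hu : ∀ s : S, u * s = 0 → s = 0) (hv : ∀ s : S, v * s = 0 → s = 0)
    (hpair : ∀ r s : S, u * r = v * s → ∃ t, r = v * t ∧ s = u * t)
    (hdet : ∀ p : MvPolynomial (Fin 2) S,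
      (C (v*f1 - u*g1) * X 0 + C (v*f2 - u*g2) * X 1) * p = 0 → p = 0) :
    ∀ p q : MvPolynomial (Fin 3) S,
      (C u * X 0 + C f1 * X 1 + C f2 * X 2) * p + (C v * X 0 + C g1 * X 1 + C g2 * X 2) * q = 0 →
      ∃ w, p = (C v * X 0 + C g1 * X 1 + C g2 * X 2) * w ∧
        q = -((C u * X 0 + C f1 * X 1 + C f2 * X 2) * w) := by
  intro p q h
  have h2 : (MvPolynomial.finSuccEquiv S 2) ((C u * X 0 + C f1 * X 1 + C f2 * X 2) * p)
      + (MvPolynomial.finSuccEquiv S 2) ((C v * X 0 + C g1 * X 1 + C g2 * X 2) * q) = 0 := by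
    rw [← map_add, h, map_zero]
  rw [map_mul, map_mul, finSuccEquiv_lin3, finSuccEquiv_lin3] at h2
  have h3 : (Polynomial.C (C u) * Polynomial.X + Polynomial.C (C f1 * X 0 + C f2 * X 1))
        * ((MvPolynomial.finSuccEquiv S 2) p)
      + (Polynomial.C (C v) * Polynomial.X + Polynomial.C (C g1 * X 0 + C g2 * X 1))
        * ((MvPolynomial.finSuccEquiv S 2) q) = 0 := by
    linear_combination h2
  have hdet' : ∀ s : MvPolynomial (Fin 2) S,
      (C v * (C f1 * X 0 + C f2 * X 1) - C u * (C g1 * X 0 + C g2 * X 1)) * s = 0 → s = 0 := by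
    intro s hs
    refine hdet s ?_
    rw [show (C (v*f1 - u*g1) * X 0 + C (v*f2 - u*g2) * X 1 : MvPolynomial (Fin 2) S)
      = C v * (C f1 * X 0 + C f2 * X 1) - C u * (C g1 * X 0 + C g2 * X 1) by
        simp only [map_sub, map_mul]; ring]
    exact hs
  obtain ⟨w', hw1, hw2⟩ := koszul_pair_poly (nzd_CM hu) (nzd_CM hv) (pair_CM hv hpair) hdet'
    (Polynomial.natDegree ((MvPolynomial.finSuccEquiv S 2) q)) _ _ le_rfl h3
  refine ⟨(MvPolynomial.finSuccEquiv S 2).symm w', ?_, ?_⟩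
  · apply (MvPolynomial.finSuccEquiv S 2).injective
    rw [map_mul, finSuccEquiv_lin3, AlgEquiv.apply_symm_apply, hw1]
    ring
  · apply (MvPolynomial.finSuccEquiv S 2).injective
    rw [map_neg, map_mul, finSuccEquiv_lin3, AlgEquiv.apply_symm_apply, hw2]
    ring

/-- the colon ideal property `((f,g) : xᵅ) = (f,g)`. -/
lemma colon_xa {R : Type*} [CommRing R] {x y z : R} {α β γ α' β' γ' : ℕ}
    {f g : MvPolynomial (Fin 3) R}
    (hf : f = C (x ^ α) * X 0 + C (y ^ β) * X 1 + C (z ^ γ) * X 2)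
    (hg : g = C (y ^ β') * X 0 + C (z ^ γ') * X 1 + C (x ^ α') * X 2)
    (F1 : ∀ s : R, x ^ α * s = 0 → s = 0)
    (F6 : ∀ s : R, y ^ β * s ∈ Ideal.span {x ^ α} → s ∈ Ideal.span {x ^ α})
    (F8 : ∀ s : R, y ^ β' * s ∈ Ideal.span {x ^ α} → s ∈ Ideal.span {x ^ α})
    (F7 : ∀ s : R, z ^ γ * s ∈ Ideal.span {x ^ α, y ^ β'} → s ∈ Ideal.span {x ^ α, y ^ β'}) :
    ∀ w p q : MvPolynomial (Fin 3) R, C (x ^ α) * w = f * p + g * q →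
      ∃ p₁ q₁, w = f * p₁ + g * q₁ := by
  intro w p q h
  set J : Ideal R := Ideal.span {x ^ α} with hJ
  set π := Ideal.Quotient.mk J with hπdef
  have hπx : π (x ^ α) = 0 := Ideal.Quotient.eq_zero_iff_mem.mpr (Ideal.subset_span rfl)
  set Pm : MvPolynomial (Fin 3) R →+* MvPolynomial (Fin 3) (R ⧸ J) :=
    (MvPolynomial.map π : MvPolynomial (Fin 3) R →+* _) with hPm
  have hfg : Pm f * Pm p + Pm g * Pm q = 0 := by
    have h0 := congrArg Pm h
    rw [map_mul, map_add, map_mul, map_mul, MvPolynomial.map_C, hπx, map_zero, zero_mul] at h0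
    exact h0.symm
  have hPmf : Pm f = C (π (x^α)) * X 0 + C (π (y^β)) * X 1 + C (π (z^γ)) * X 2 := by
    rw [hf]; simp [hPm]
  have hPmg : Pm g = C (π (y^β')) * X 0 + C (π (z^γ')) * X 1 + C (π (x^α')) * X 2 := by
    rw [hg]; simp [hPm]
  -- transfer along finSuccEquiv
  set Φ := MvPolynomial.finSuccEquiv (R ⧸ J) 2 with hΦ
  set Fb : MvPolynomial (Fin 2) (R ⧸ J) := C (π (y^β)) * X 0 + C (π (z^γ)) * X 1 with hFb
  set gb : MvPolynomial (Fin 2) (R ⧸ J) := C (π (z^γ')) * X 0 + C (π (x^α')) * X 1 with hgb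
  have hΦf : Φ (Pm f) = Polynomial.C Fb := by
    rw [hPmf, finSuccEquiv_lin3, ← hFb, hπx, MvPolynomial.C_0, Polynomial.C_0, zero_mul, add_zero]
  have hΦg : Φ (Pm g) = Polynomial.C (C (π (y^β'))) * Polynomial.X + Polynomial.C gb := by
    rw [hPmg, finSuccEquiv_lin3, ← hgb]
    ring
  have heq : Polynomial.C Fb * Φ (Pm p)
      + (Polynomial.C (C (π (y^β'))) * Polynomial.X + Polynomial.C gb) * Φ (Pm q) = 0 := by
    have h5 : Φ (Pm f * Pm p + Pm g * Pm q) = 0 := by rw [hfg, map_zero]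
    rw [map_add, map_mul, map_mul, hΦf, hΦg] at h5
    exact h5
  -- hypotheses of koszul_pair_poly2
  have hFnzd : ∀ s : MvPolynomial (Fin 2) (R ⧸ J), Fb * s = 0 → s = 0 := by
    rw [hFb]; exact nzd_lin2 (nzd_quot F6) _
  have hvnzd : ∀ s : MvPolynomial (Fin 2) (R ⧸ J), C (π (y^β')) * s = 0 → s = 0 :=
    nzd_CM (nzd_quot F8)
  have hpair2 : ∀ r s : MvPolynomial (Fin 2) (R ⧸ J), Fb * r = C (π (y^β')) * s →
      ∃ t, r = C (π (y^β')) * t ∧ s = Fb * t := by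
    intro r s hrs
    set K : Ideal R := Ideal.span {x ^ α, y ^ β'} with hK
    have hJK : J ≤ K := Ideal.span_mono (by simp)
    set μ := Ideal.Quotient.factor hJK with hμ
    have hμmk : ∀ t : R, μ (π t) = Ideal.Quotient.mk K t := fun t =>
      Ideal.Quotient.factor_mk hJK t
    have hμv : Ideal.Quotient.mk K (y ^ β') = 0 := by
      rw [Ideal.Quotient.eq_zero_iff_mem]
      exact Ideal.subset_span (by simp)
    have h3 : (C (Ideal.Quotient.mk K (y^β)) * X 0 + C (Ideal.Quotient.mk K (z^γ)) * X 1)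
        * (MvPolynomial.map μ) r = 0 := by
      have h4 := congrArg (MvPolynomial.map μ) hrs
      rw [hFb] at h4
      simp only [map_add, map_mul, MvPolynomial.map_C, MvPolynomial.map_X, hμmk, hμv,
        MvPolynomial.C_0, map_zero, zero_mul] at h4
      exact h4
    have hM2r : (MvPolynomial.map μ) r = 0 := by
      refine nzd_lin2' (nzd_quot ?_) _ _ h3
      exact F7
    -- coefficients of r are divisible by π (y^β')
    have hdvd : C (π (y ^ β')) ∣ r := by
      rw [MvPolynomial.C_dvd_iff_dvd_coeff]
      intro d
      have hc : μ (MvPolynomial.coeff d r) = 0 := by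
        have := congrArg (MvPolynomial.coeff d) hM2r
        simpa [MvPolynomial.coeff_map] using this
      obtain ⟨s', hs'⟩ := Ideal.Quotient.mk_surjective (MvPolynomial.coeff d r)
      rw [← hs', hμmk, Ideal.Quotient.eq_zero_iff_mem, hK, Ideal.mem_span_pair] at hc
      obtain ⟨t1, t2, ht⟩ := hc
      refine ⟨π t2, ?_⟩
      rw [← hs', ← ht]
      have : π (x ^ α) = 0 := hπx
      rw [map_add, map_mul, map_mul, this, mul_zero, zero_add]
      ring
    obtain ⟨t, ht⟩ := hdvd
    refine ⟨t, ht, ?_⟩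
    have h5 : C (π (y^β')) * (Fb * t - s) = 0 := by
      rw [ht] at hrs
      linear_combination hrs
    have := hvnzd _ h5
    linear_combination -this
  obtain ⟨w', hw1, hw2⟩ := koszul_pair_poly2 hFnzd hvnzd hpair2
    (Polynomial.natDegree (Φ (Pm q))) _ _ le_rfl heq
  -- pull back
  have hw1' : Pm p = Pm g * Φ.symm w' := by
    apply Φ.injective
    rw [map_mul, hΦg, AlgEquiv.apply_symm_apply, hw1]
  have hw2' : Pm q = -(Pm f * Φ.symm w') := by
    apply Φ.injective
    rw [map_neg, map_mul, hΦf, AlgEquiv.apply_symm_apply, hw2]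
  obtain ⟨u, hu⟩ := MvPolynomial.map_surjective π Ideal.Quotient.mk_surjective (Φ.symm w')
  have hdp : C (x ^ α) ∣ (p - g * u) := by
    rw [MvPolynomial.C_dvd_iff_dvd_coeff]
    intro d
    have h0 : Pm (p - g * u) = 0 := by
      rw [map_sub, map_mul, hu, hw1', sub_self]
    have := congrArg (MvPolynomial.coeff d) h0
    rw [hPm, MvPolynomial.coeff_map, MvPolynomial.coeff_zero, hπdef,
      Ideal.Quotient.eq_zero_iff_mem, hJ, Ideal.mem_span_singleton] at this
    exact this
  have hdq : C (x ^ α) ∣ (q + f * u) := by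
    rw [MvPolynomial.C_dvd_iff_dvd_coeff]
    intro d
    have h0 : Pm (q + f * u) = 0 := by
      rw [map_add, map_mul, hu, hw2']; ring
    have := congrArg (MvPolynomial.coeff d) h0
    rw [hPm, MvPolynomial.coeff_map, MvPolynomial.coeff_zero, hπdef,
      Ideal.Quotient.eq_zero_iff_mem, hJ, Ideal.mem_span_singleton] at this
    exact this
  obtain ⟨p₁, hp₁⟩ := hdp
  obtain ⟨q₁, hq₁⟩ := hdq
  refine ⟨p₁, q₁, ?_⟩
  have hfinal : C (x ^ α) * (w - (f * p₁ + g * q₁)) = 0 := by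
    linear_combination h + f * hp₁ + g * hq₁
  have := nzd_CM F1 _ hfinal
  linear_combination this

end SEC7

section SEC8
open MvPolynomial

lemma degree_single_eq {σ : Type*} {i : σ} {k : ℕ} : (Finsupp.single i k).degree = k := by
  classical
  rcases eq_or_ne k 0 with rfl | hk
  · simp [Finsupp.degree]
  · rw [Finsupp.degree_single]

lemma univar_homog_single {S : Type*} [CommRing S] {t : MvPolynomial (Fin 1) S} {n : ℕ}
    (ht : t.IsHomogeneous n) :
    t = monomial (Finsupp.single 0 n) (coeff (Finsupp.single 0 n) t) := by
  ext d
  rw [coeff_monomial]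
  rcases eq_or_ne (Finsupp.single (0 : Fin 1) n) d with heq | hne
  · rw [if_pos heq, heq]
  · rw [if_neg hne]
    refine ht.coeff_eq_zero ?_
    have hd : d = Finsupp.single (0 : Fin 1) (d 0) := by
      apply Finsupp.ext
      intro i
      obtain rfl : i = (0 : Fin 1) := Subsingleton.elim _ _
      simp
    have hd0 : d 0 ≠ n := fun hcon => hne (by rw [hd, hcon])
    rw [hd, degree_single_eq]
    exact hd0

lemma phaseB {R : Type*} [CommRing R] {b c : R}
    (hcn : ∀ s : R, c * s = 0 → s = 0)
    (hbc : ∀ s : R, b * s ∈ Ideal.span {c} → s ∈ Ideal.span {c})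
    {n : ℕ} :
    ∀ (d : ℕ) (w : MvPolynomial (Fin 2) R), w.IsHomogeneous n →
      (MvPolynomial.finSuccEquiv R 1 w).natDegree ≤ d →
      MvPolynomial.aeval ![b, c] w = 0 →
      ∃ h, w = (C c * X 0 - C b * X 1) * h := by
  intro d
  induction d with
  | zero =>
    intro w hw hdeg haev
    set s0 := (MvPolynomial.finSuccEquiv R 1 w).coeff 0 with hs0
    have hwC : MvPolynomial.finSuccEquiv R 1 w = Polynomial.C s0 :=
      Polynomial.eq_C_of_natDegree_le_zero hdeg
    have hwr : w = rename Fin.succ s0 := by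
      apply (MvPolynomial.finSuccEquiv R 1).injective
      rw [hwC, finSuccEquiv_rename_succ]
    have hs0hom : s0.IsHomogeneous n := by
      have := hw.finSuccEquiv_coeff_isHomogeneous 0 n (by omega)
      simpa [hs0] using this
    have hev : MvPolynomial.aeval ![c] s0 = 0 := by
      rw [hwr, MvPolynomial.aeval_rename] at haev
      have hcomp : (![b, c] ∘ Fin.succ) = ![c] := by
        funext i
        obtain rfl : i = (0 : Fin 1) := Subsingleton.elim _ _
        simp [Fin.succ_zero_eq_one]
      rwa [hcomp] at haev
    have hstruct := univar_homog_single hs0hom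
    set r := coeff (Finsupp.single (0 : Fin 1) n) s0 with hr
    have hrc : r * c ^ n = 0 := by
      rw [hstruct] at hev
      simpa [MvPolynomial.aeval_monomial, Finsupp.prod_single_index] using hev
    have hr0 : r = 0 := nzd_pow hcn n r (by linear_combination hrc)
    refine ⟨0, ?_⟩
    rw [mul_zero, hwr, hstruct, hr0, map_zero, map_zero]
  | succ d IH =>
    intro w hw hdeg haev
    by_cases hle : (MvPolynomial.finSuccEquiv R 1 w).natDegree ≤ d
    · exact IH w hw hle haev
    have hD : (MvPolynomial.finSuccEquiv R 1 w).natDegree = d + 1 := by omega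
    have hw0 : MvPolynomial.finSuccEquiv R 1 w ≠ 0 := by
      intro h0
      rw [h0, Polynomial.natDegree_zero] at hD
      omega
    set s := (MvPolynomial.finSuccEquiv R 1 w).coeff (d+1) with hs
    have hsne : s ≠ 0 := by
      have := Polynomial.leadingCoeff_ne_zero.mpr hw0
      rwa [Polynomial.leadingCoeff, hD] at this
    have hd1n : d + 1 ≤ n := by
      by_contra hgt
      push_neg at hgt
      exact hsne (by rw [hs]; exact coeff_finSuccEquiv_of_lt hw (by omega))
    have hshom : s.IsHomogeneous (n - (d+1)) :=
      hw.finSuccEquiv_coeff_isHomogeneous (d+1) (n - (d+1)) (by omega)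
    set l := (rename Fin.succ s * X 0 ^ d : MvPolynomial (Fin 2) R) with hl
    have hlhom : l.IsHomogeneous (n - 1) := by
      have h1 : (rename Fin.succ s).IsHomogeneous (n - (d+1)) := hshom.rename_isHomogeneous
      have h2 := h1.mul (isHomogeneous_X_pow (R := R) 0 d)
      rwa [show n - (d+1) + d = n - 1 from by omega] at h2
    have hΦl : MvPolynomial.finSuccEquiv R 1 l = Polynomial.C s * Polynomial.X ^ d := by
      rw [hl, map_mul, map_pow, finSuccEquiv_rename_succ, finSuccEquiv_X_zero]
    set L := (C c * X 0 - C b * X 1 : MvPolynomial (Fin 2) R) with hL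
    have hΦL : MvPolynomial.finSuccEquiv R 1 L
        = Polynomial.C (C c) * Polynomial.X - Polynomial.C (C b * X 0) := by
      rw [hL, map_sub, map_mul, map_mul, finSuccEquiv_C', finSuccEquiv_X_zero,
        show (1 : Fin 2) = (0 : Fin 1).succ from rfl, finSuccEquiv_X_succ, finSuccEquiv_C',
        ← Polynomial.C_mul]
    set v := (C c * w - L * l : MvPolynomial (Fin 2) R) with hv
    have hvhom : v.IsHomogeneous n := by
      refine MvPolynomial.IsHomogeneous.sub (hw.C_mul c) ?_
      have hLhom : L.IsHomogeneous 1 := by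
        rw [hL]; exact (isHomogeneous_C_mul_X c 0).sub (isHomogeneous_C_mul_X b 1)
      have := hLhom.mul hlhom
      rwa [show 1 + (n - 1) = n from by omega] at this
    have hvaev : MvPolynomial.aeval ![b, c] v = 0 := by
      rw [hv, map_sub, map_mul, map_mul, haev, hL, map_sub, map_mul, map_mul]
      simp only [MvPolynomial.aeval_C, MvPolynomial.aeval_X, Matrix.cons_val_zero,
        Matrix.cons_val_one, Matrix.head_cons, Algebra.algebraMap_self_apply]
      ring
    have hvdeg : (MvPolynomial.finSuccEquiv R 1 v).natDegree ≤ d := by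
      rw [Polynomial.natDegree_le_iff_coeff_eq_zero]
      intro N hN
      rw [hv, map_sub, map_mul, map_mul, hΦL, hΦl, finSuccEquiv_C']
      have hexp : (Polynomial.C (C c) * Polynomial.X - Polynomial.C (C b * X 0))
          * (Polynomial.C s * Polynomial.X ^ d)
          = Polynomial.C (C c * s) * Polynomial.X ^ (d+1)
            - Polynomial.C (C b * X 0 * s) * Polynomial.X ^ d := by
        simp only [Polynomial.C_mul]; ring
      rw [hexp]
      simp only [Polynomial.coeff_sub, Polynomial.coeff_C_mul, Polynomial.coeff_X_pow]
      rcases eq_or_ne N (d+1) with rfl | hNe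
      · rw [if_pos rfl, if_neg (by omega), ← hs]
        ring
      · rw [if_neg (by omega), if_neg (by omega),
          Polynomial.coeff_eq_zero_of_natDegree_lt (by omega : (MvPolynomial.finSuccEquiv R 1 w).natDegree < N)]
        ring
    obtain ⟨h1, hh1⟩ := IH v hvhom hvdeg hvaev
    have hkey : C c * w = L * (h1 + l) := by
      rw [hv] at hh1
      linear_combination hh1
    have hmkc : Ideal.Quotient.mk (Ideal.span {c}) c = 0 :=
      Ideal.Quotient.eq_zero_iff_mem.mpr (Ideal.subset_span rfl)
    have hρ0 : (MvPolynomial.map (Ideal.Quotient.mk (Ideal.span {c}))) (C c * w) = 0 := by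
      rw [map_mul, MvPolynomial.map_C, hmkc, MvPolynomial.C_0, zero_mul]
    have hρL : (MvPolynomial.map (Ideal.Quotient.mk (Ideal.span {c}))) L
        = C (0 : R ⧸ Ideal.span {c}) * X 0
          + C (-(Ideal.Quotient.mk (Ideal.span {c}) b)) * X 1 := by
      rw [hL, map_sub, map_mul, map_mul, MvPolynomial.map_C, MvPolynomial.map_C,
        MvPolynomial.map_X, MvPolynomial.map_X, hmkc, map_neg]
      ring
    have h0 : (MvPolynomial.map (Ideal.Quotient.mk (Ideal.span {c}))) (h1 + l) = 0 := by
      refine nzd_lin2' (w₁ := -(Ideal.Quotient.mk (Ideal.span {c}) b)) ?_ 0 _ ?_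
      · intro s' hs'
        refine nzd_quot hbc s' ?_
        linear_combination -hs'
      · rw [← hρL, ← map_mul, ← hkey, hρ0]
    have hdvd : C c ∣ (h1 + l) := by
      rw [MvPolynomial.C_dvd_iff_dvd_coeff]
      intro dd
      have := congrArg (MvPolynomial.coeff dd) h0
      rw [MvPolynomial.coeff_map, MvPolynomial.coeff_zero,
        Ideal.Quotient.eq_zero_iff_mem, Ideal.mem_span_singleton] at this
      exact this
    obtain ⟨h2, hh2⟩ := hdvd
    refine ⟨h2, ?_⟩
    have hfin : C c * (w - L * h2) = 0 := by
      linear_combination hkey + L * hh2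
    have := nzd_CM hcn _ hfin
    linear_combination this

end SEC8

section SEC9
open MvPolynomial

lemma phaseA {R : Type*} [CommRing R] {x y z a b c : R} {α β γ α' β' γ' : ℕ}
    {f g : MvPolynomial (Fin 3) R}
    (hf : f = C (x ^ α) * X 0 + C (y ^ β) * X 1 + C (z ^ γ) * X 2)
    (hg : g = C (y ^ β') * X 0 + C (z ^ γ') * X 1 + C (x ^ α') * X 2)
    (hfa : MvPolynomial.aeval ![a, b, c] f = 0)
    (IDL : (C c * X 1 - C b * X 2 : MvPolynomial (Fin 3) R) = C (y ^ β') * f - C (x ^ α) * g)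
    (F1 : ∀ s : R, x ^ α * s = 0 → s = 0)
    (F6 : ∀ s : R, y ^ β * s ∈ Ideal.span {x ^ α} → s ∈ Ideal.span {x ^ α})
    (F8 : ∀ s : R, y ^ β' * s ∈ Ideal.span {x ^ α} → s ∈ Ideal.span {x ^ α})
    (F7 : ∀ s : R, z ^ γ * s ∈ Ideal.span {x ^ α, y ^ β'} → s ∈ Ideal.span {x ^ α, y ^ β'})
    (hcn : ∀ s : R, c * s = 0 → s = 0)
    (hbc : ∀ s : R, b * s ∈ Ideal.span {c} → s ∈ Ideal.span {c})
    {n : ℕ} :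
    ∀ (d : ℕ) (w : MvPolynomial (Fin 3) R), w.IsHomogeneous n →
      (MvPolynomial.finSuccEquiv R 2 w).natDegree ≤ d →
      MvPolynomial.aeval ![a, b, c] w = 0 →
      ∃ p q, w = f * p + g * q := by
  intro d
  induction d with
  | zero =>
    intro w hw hdeg haev
    set w0 := (MvPolynomial.finSuccEquiv R 2 w).coeff 0 with hw0
    have hwC : MvPolynomial.finSuccEquiv R 2 w = Polynomial.C w0 :=
      Polynomial.eq_C_of_natDegree_le_zero hdeg
    have hwr : w = rename Fin.succ w0 := by
      apply (MvPolynomial.finSuccEquiv R 2).injective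
      rw [hwC, finSuccEquiv_rename_succ]
    have hw0hom : w0.IsHomogeneous n := by
      have := hw.finSuccEquiv_coeff_isHomogeneous 0 n (by omega)
      simpa [hw0] using this
    have hev : MvPolynomial.aeval ![b, c] w0 = 0 := by
      rw [hwr, MvPolynomial.aeval_rename] at haev
      have hcomp : (![a, b, c] ∘ Fin.succ) = ![b, c] := by
        funext i
        fin_cases i <;> rfl
      rwa [hcomp] at haev
    obtain ⟨h, hh⟩ := phaseB hcn hbc (Polynomial.natDegree
      (MvPolynomial.finSuccEquiv R 1 w0)) w0 hw0hom le_rfl hev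
    have hrw : w = (C c * X 1 - C b * X 2) * rename Fin.succ h := by
      rw [hwr, hh, map_mul, map_sub, map_mul, map_mul, rename_C, rename_C, rename_X, rename_X]
      rfl
    refine ⟨C (y ^ β') * rename Fin.succ h, -(C (x ^ α) * rename Fin.succ h), ?_⟩
    rw [hrw, IDL]
    ring
  | succ d IH =>
    intro w hw hdeg haev
    by_cases hle : (MvPolynomial.finSuccEquiv R 2 w).natDegree ≤ d
    · exact IH w hw hle haev
    have hD : (MvPolynomial.finSuccEquiv R 2 w).natDegree = d + 1 := by omega
    have hwne : MvPolynomial.finSuccEquiv R 2 w ≠ 0 := by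
      intro h0
      rw [h0, Polynomial.natDegree_zero] at hD
      omega
    set s := (MvPolynomial.finSuccEquiv R 2 w).coeff (d+1) with hs
    have hsne : s ≠ 0 := by
      have := Polynomial.leadingCoeff_ne_zero.mpr hwne
      rwa [Polynomial.leadingCoeff, hD] at this
    have hd1n : d + 1 ≤ n := by
      by_contra hgt
      push_neg at hgt
      exact hsne (by rw [hs]; exact coeff_finSuccEquiv_of_lt hw (by omega))
    have hshom : s.IsHomogeneous (n - (d+1)) :=
      hw.finSuccEquiv_coeff_isHomogeneous (d+1) (n - (d+1)) (by omega)
    set l := (rename Fin.succ s * X 0 ^ d : MvPolynomial (Fin 3) R) with hl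
    have hlhom : l.IsHomogeneous (n - 1) := by
      have h1 : (rename Fin.succ s).IsHomogeneous (n - (d+1)) := hshom.rename_isHomogeneous
      have h2 := h1.mul (isHomogeneous_X_pow (R := R) 0 d)
      rwa [show n - (d+1) + d = n - 1 from by omega] at h2
    have hΦl : MvPolynomial.finSuccEquiv R 2 l = Polynomial.C s * Polynomial.X ^ d := by
      rw [hl, map_mul, map_pow, finSuccEquiv_rename_succ, finSuccEquiv_X_zero]
    have hΦf : MvPolynomial.finSuccEquiv R 2 f
        = Polynomial.C (C (y ^ β) * X 0 + C (z ^ γ) * X 1)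
          + Polynomial.C (C (x ^ α)) * Polynomial.X := by
      rw [hf, finSuccEquiv_lin3]
    have hfhom : f.IsHomogeneous 1 := by
      rw [hf]
      exact ((isHomogeneous_C_mul_X _ 0).add (isHomogeneous_C_mul_X _ 1)).add
        (isHomogeneous_C_mul_X _ 2)
    set v := (C (x ^ α) * w - f * l : MvPolynomial (Fin 3) R) with hv
    have hvhom : v.IsHomogeneous n := by
      refine MvPolynomial.IsHomogeneous.sub (hw.C_mul _) ?_
      have := hfhom.mul hlhom
      rwa [show 1 + (n - 1) = n from by omega] at this
    have hvaev : MvPolynomial.aeval ![a, b, c] v = 0 := by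
      rw [hv, map_sub, map_mul, map_mul, haev, hfa, mul_zero, zero_mul, sub_zero]
    have hvdeg : (MvPolynomial.finSuccEquiv R 2 v).natDegree ≤ d := by
      rw [Polynomial.natDegree_le_iff_coeff_eq_zero]
      intro N hN
      rw [hv, map_sub, map_mul, map_mul, hΦf, hΦl, finSuccEquiv_C']
      have hexp : (Polynomial.C (C (y ^ β) * X 0 + C (z ^ γ) * X 1)
            + Polynomial.C (C (x ^ α)) * Polynomial.X) * (Polynomial.C s * Polynomial.X ^ d)
          = Polynomial.C ((C (y ^ β) * X 0 + C (z ^ γ) * X 1) * s) * Polynomial.X ^ d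
            + Polynomial.C (C (x ^ α) * s) * Polynomial.X ^ (d+1) := by
        simp only [Polynomial.C_mul]; ring
      rw [hexp]
      simp only [Polynomial.coeff_sub, Polynomial.coeff_add, Polynomial.coeff_C_mul,
        Polynomial.coeff_X_pow]
      rcases eq_or_ne N (d+1) with rfl | hNe
      · rw [if_pos rfl, if_neg (by omega), ← hs]
        ring
      · rw [if_neg (by omega), if_neg (by omega),
          Polynomial.coeff_eq_zero_of_natDegree_lt
            (by omega : (MvPolynomial.finSuccEquiv R 2 w).natDegree < N)]
        ring
    obtain ⟨p', q', hpq⟩ := IH v hvhom hvdeg hvaev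
    have hkey : C (x ^ α) * w = f * (p' + l) + g * q' := by
      rw [hv] at hpq
      linear_combination hpq
    exact colon_xa hf hg F1 F6 F8 F7 w (p' + l) q' hkey

end SEC9

section SEC10
open MvPolynomial

lemma homogComp_mul {σ : Type*} {R : Type*} [CommRing R] {h : MvPolynomial σ R}
    (hh : h.IsHomogeneous 1) (k : ℕ) (p : MvPolynomial σ R) :
    homogeneousComponent (k+1) (h * p) = h * homogeneousComponent k p := by
  induction p using MvPolynomial.induction_on' with
  | monomial u r =>
    have hu : (monomial u r) ∈ homogeneousSubmodule σ R u.degree :=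
      (mem_homogeneousSubmodule _ _).mpr (isHomogeneous_monomial r rfl)
    have hmul : h * monomial u r ∈ homogeneousSubmodule σ R (1 + u.degree) :=
      (mem_homogeneousSubmodule _ _).mpr (hh.mul (isHomogeneous_monomial r rfl))
    rw [homogeneousComponent_of_mem hmul, homogeneousComponent_of_mem hu]
    rcases eq_or_ne u.degree k with he | hne
    · rw [if_pos (by omega), if_pos he.symm]
    · rw [if_neg (by omega), if_neg (fun hcon => hne hcon.symm), mul_zero]
  | add p q hp hq => rw [mul_add, map_add, map_add, hp, hq, mul_add]

lemma coeff_mul_mem {R : Type*} [CommRing R] {m : Ideal R} {σ : Type*}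
    {h : MvPolynomial σ R} (hcoef : ∀ d, MvPolynomial.coeff d h ∈ m)
    (p : MvPolynomial σ R) (d : σ →₀ ℕ) : MvPolynomial.coeff d (h * p) ∈ m := by
  classical
  rw [MvPolynomial.coeff_mul]
  exact Submodule.sum_mem _ (fun x _ => Ideal.mul_mem_right _ _ (hcoef x.1))

lemma coeff_lin_mem {R : Type*} [CommRing R] {m : Ideal R} {w₀ w₁ w₂ : R}
    (h0 : w₀ ∈ m) (h1 : w₁ ∈ m) (h2 : w₂ ∈ m) (d : Fin 3 →₀ ℕ) :
    MvPolynomial.coeff d (C w₀ * X 0 + C w₁ * X 1 + C w₂ * X 2) ∈ m := by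
  rw [MvPolynomial.coeff_add, MvPolynomial.coeff_add, MvPolynomial.coeff_C_mul,
    MvPolynomial.coeff_C_mul, MvPolynomial.coeff_C_mul]
  refine add_mem (add_mem ?_ ?_) ?_ <;>
  · rw [MvPolynomial.coeff_X']
    split
    · simpa using ‹_›
    · simp

lemma degree_fin3 (d : Fin 3 →₀ ℕ) : d.degree = d 0 + d 1 + d 2 := by
  rw [Finsupp.degree_apply,
    Finset.sum_subset (Finset.subset_univ d.support)
      (fun i _ hi => Finsupp.notMem_support_iff.mp hi), Fin.sum_univ_three]

lemma mem_smul_top_of_coeff {R : Type*} [CommRing R] {m : Ideal R} {k : ℕ}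
    (W : homogeneousSubmodule (Fin 3) R k)
    (hco : ∀ d, MvPolynomial.coeff d (W : MvPolynomial (Fin 3) R) ∈ m) :
    W ∈ m • (⊤ : Submodule R (homogeneousSubmodule (Fin 3) R k)) := by
  classical
  have hWhom : (W : MvPolynomial (Fin 3) R).IsHomogeneous k :=
    (mem_homogeneousSubmodule _ _).mp W.2
  have hdeg : ∀ d ∈ (W : MvPolynomial (Fin 3) R).support, (d : Fin 3 →₀ ℕ).degree = k := by
    intro d hd
    have := hWhom (MvPolynomial.mem_support_iff.mp hd)
    rwa [Finsupp.degree_eq_weight_one]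
  have hW : W = ∑ d ∈ (W : MvPolynomial (Fin 3) R).support.attach,
      (MvPolynomial.coeff d.1 (W : MvPolynomial (Fin 3) R)) •
        (⟨MvPolynomial.monomial d.1 1,
          (mem_homogeneousSubmodule _ _).mpr (isHomogeneous_monomial 1 (hdeg d.1 d.2))⟩ :
          homogeneousSubmodule (Fin 3) R k) := by
    apply Subtype.ext
    push_cast
    rw [Finset.sum_attach ((W : MvPolynomial (Fin 3) R).support)
      (fun d => (MvPolynomial.coeff d (W : MvPolynomial (Fin 3) R)) •
        (MvPolynomial.monomial d (1 : R)))]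
    rw [show (∑ d ∈ (W : MvPolynomial (Fin 3) R).support,
        (MvPolynomial.coeff d (W : MvPolynomial (Fin 3) R)) • (MvPolynomial.monomial d (1 : R)))
        = ∑ d ∈ (W : MvPolynomial (Fin 3) R).support,
          MvPolynomial.monomial d (MvPolynomial.coeff d (W : MvPolynomial (Fin 3) R)) from
      Finset.sum_congr rfl (fun d _ => by rw [MvPolynomial.smul_monomial, smul_eq_mul, mul_one])]
    rw [MvPolynomial.support_sum_monomial_coeff]
  rw [hW]
  exact Submodule.sum_mem _ (fun d _ =>
    Submodule.smul_mem_smul (hco d.1) Submodule.mem_top)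

lemma prod_mem_smul {R : Type*} [CommRing R] {m : Ideal R} {M N : Type*}
    [AddCommGroup M] [Module R M] [AddCommGroup N] [Module R N] {v₁ : M} {v₂ : N}
    (h1 : v₁ ∈ m • (⊤ : Submodule R M)) (h2 : v₂ ∈ m • (⊤ : Submodule R N)) :
    (v₁, v₂) ∈ m • (⊤ : Submodule R (M × N)) := by
  have e1 : ((v₁, 0) : M × N) ∈ m • (⊤ : Submodule R (M × N)) := by
    have h3 : ((v₁, 0) : M × N) ∈ Submodule.map (LinearMap.inl R M N) (m • ⊤) :=
      ⟨v₁, h1, rfl⟩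
    rw [Submodule.map_smul''] at h3
    exact Submodule.smul_mono le_rfl le_top h3
  have e2 : ((0, v₂) : M × N) ∈ m • (⊤ : Submodule R (M × N)) := by
    have h3 : ((0, v₂) : M × N) ∈ Submodule.map (LinearMap.inr R M N) (m • ⊤) :=
      ⟨v₂, h2, rfl⟩
    rw [Submodule.map_smul''] at h3
    exact Submodule.smul_mono le_rfl le_top h3
  have := Submodule.add_mem _ e1 e2
  simpa using this

end SEC10

open IsLocalRing MvPolynomial

/-- For `n ≥ 2` the complex
`0 → S_{n-2} →^{(-g,f)ᵀ} S_{n-1} ⊕ S_{n-1} →^{(f g)} S_n →^ε R`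
is acyclic and is a minimal free resolution of `Iⁿ`, where `S_d` is the module
of degree-`d` homogeneous polynomials of `S = R[A,B,C]` and `ε` substitutes
`a, b, c` for the variables. -/
theorem power_minimal_free_resolution
    {R : Type*} [CommRing R] [IsNoetherianRing R] [IsLocalRing R]
    (hdim : ringKrullDim R = 3)
    (hCM : ∀ u v w : R, (Ideal.span {u, v, w}).radical = maximalIdeal R →
      RingTheory.Sequence.IsRegular R [u, v, w])
    (x y z : R) (hsop : (Ideal.span {x, y, z}).radical = maximalIdeal R)
    (α β γ α' β' γ' : ℕ)
    (hα : 0 < α) (hβ : 0 < β) (hγ : 0 < γ)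
    (hα' : 0 < α') (hβ' : 0 < β') (hγ' : 0 < γ')
    (a b c : R)
    (ha : a = z ^ (γ + γ') - x ^ α' * y ^ β)
    (hb : b = x ^ (α + α') - y ^ β' * z ^ γ)
    (hc : c = y ^ (β + β') - x ^ α * z ^ γ')
    (I : Ideal R) (hI : I = Ideal.span {a, b, c})
    (f g : MvPolynomial (Fin 3) R)
    (hf : f = C (x ^ α) * X 0 + C (y ^ β) * X 1 + C (z ^ γ) * X 2)
    (hg : g = C (y ^ β') * X 0 + C (z ^ γ') * X 1 + C (x ^ α') * X 2)
    (n : ℕ) (hn : 2 ≤ n)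
    (φ₃ : homogeneousSubmodule (Fin 3) R (n - 2) →ₗ[R]
      homogeneousSubmodule (Fin 3) R (n - 1) × homogeneousSubmodule (Fin 3) R (n - 1))
    (hφ₃ : ∀ u : homogeneousSubmodule (Fin 3) R (n - 2),
      ((φ₃ u).1 : MvPolynomial (Fin 3) R) = -(g * (u : MvPolynomial (Fin 3) R)) ∧
      ((φ₃ u).2 : MvPolynomial (Fin 3) R) = f * (u : MvPolynomial (Fin 3) R))
    (φ₂ : homogeneousSubmodule (Fin 3) R (n - 1) × homogeneousSubmodule (Fin 3) R (n - 1)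
      →ₗ[R] homogeneousSubmodule (Fin 3) R n)
    (hφ₂ : ∀ v : homogeneousSubmodule (Fin 3) R (n - 1) × homogeneousSubmodule (Fin 3) R (n - 1),
      ((φ₂ v : MvPolynomial (Fin 3) R)) =
        f * (v.1 : MvPolynomial (Fin 3) R) + g * (v.2 : MvPolynomial (Fin 3) R))
    (ε : homogeneousSubmodule (Fin 3) R n →ₗ[R] R)
    (hε : ∀ w : homogeneousSubmodule (Fin 3) R n,
      ε w = MvPolynomial.aeval ![a, b, c] (w : MvPolynomial (Fin 3) R)) :
    Function.Injective φ₃ ∧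
      Function.Exact φ₃ φ₂ ∧
      Function.Exact φ₂ ε ∧
      LinearMap.range ε = (I ^ n : Ideal R) ∧
      -- minimality
      LinearMap.range φ₃ ≤ (maximalIdeal R) • ⊤ ∧
      LinearMap.range φ₂ ≤ (maximalIdeal R) • ⊤ ∧
      LinearMap.ker ε ≤ (maximalIdeal R) • ⊤ := by
  obtain ⟨F1, F6, F8, F7, F9, Db, Ec, Ebc⟩ :=
    all_facts hCM hsop hα hβ hγ hα' hβ' hγ' ha hb hc
  have hv0 : (![a, b, c] : Fin 3 → R) 0 = a := rfl
  have hv1 : (![a, b, c] : Fin 3 → R) 1 = b := rfl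
  have hv2 : (![a, b, c] : Fin 3 → R) 2 = c := rfl
  have hfnzd : ∀ p : MvPolynomial (Fin 3) R, f * p = 0 → p = 0 := by
    rw [hf]; exact nzd_lin3 F1 _ _
  have hfa : MvPolynomial.aeval ![a, b, c] f = 0 := by
    rw [hf]
    simp only [map_add, map_mul, MvPolynomial.aeval_C, MvPolynomial.aeval_X,
      Algebra.algebraMap_self_apply]
    rw [hv0, hv1, hv2, ha, hb, hc]; ring
  have hga : MvPolynomial.aeval ![a, b, c] g = 0 := by
    rw [hg]
    simp only [map_add, map_mul, MvPolynomial.aeval_C, MvPolynomial.aeval_X,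
      Algebra.algebraMap_self_apply]
    rw [hv0, hv1, hv2, ha, hb, hc]; ring
  have IDL : (C c * X 1 - C b * X 2 : MvPolynomial (Fin 3) R)
      = C (y ^ β') * f - C (x ^ α) * g := by
    rw [hf, hg, hb, hc]
    simp only [pow_add, MvPolynomial.C_sub, MvPolynomial.C_mul]
    ring
  have hpairA : ∀ r s : R, x ^ α * r = y ^ β' * s → ∃ t, r = y ^ β' * t ∧ s = x ^ α * t := by
    intro r s hrs
    have h1 : y ^ β' * s ∈ Ideal.span {x ^ α} := by
      rw [← hrs]; exact Ideal.mem_span_singleton.mpr ⟨r, rfl⟩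
    obtain ⟨t, ht⟩ := Ideal.mem_span_singleton.mp (F8 s h1)
    refine ⟨t, ?_, ht⟩
    have h2 : x ^ α * (r - y ^ β' * t) = 0 := by rw [ht] at hrs; linear_combination hrs
    have := F1 _ h2
    linear_combination this
  have hdet2 : ∀ p : MvPolynomial (Fin 2) R,
      (C (y ^ β' * y ^ β - x ^ α * z ^ γ') * X 0
        + C (y ^ β' * z ^ γ - x ^ α * x ^ α') * X 1) * p = 0 → p = 0 := by
    have e1 : y ^ β' * y ^ β - x ^ α * z ^ γ' = c := by rw [hc]; ring
    have e2 : y ^ β' * z ^ γ - x ^ α * x ^ α' = -b := by rw [hb]; ring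
    rw [e1, e2]
    exact nzd_lin2 Ec _
  have CF2 : ∀ p q : MvPolynomial (Fin 3) R, f * p + g * q = 0 →
      ∃ u, p = g * u ∧ q = -(f * u) := by
    rw [hf, hg]
    exact koszul_M3 F1 F9 hpairA hdet2
  have hfhom : f.IsHomogeneous 1 := by
    rw [hf]
    exact ((isHomogeneous_C_mul_X _ 0).add (isHomogeneous_C_mul_X _ 1)).add
      (isHomogeneous_C_mul_X _ 2)
  have hghom : g.IsHomogeneous 1 := by
    rw [hg]
    exact ((isHomogeneous_C_mul_X _ 0).add (isHomogeneous_C_mul_X _ 1)).add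
      (isHomogeneous_C_mul_X _ 2)
  have P3 : ∀ w : MvPolynomial (Fin 3) R, w.IsHomogeneous n →
      MvPolynomial.aeval ![a, b, c] w = 0 → ∃ p q, w = f * p + g * q :=
    fun w hw hev => phaseA hf hg hfa IDL F1 F6 F8 F7 Ec Ebc
      ((MvPolynomial.finSuccEquiv R 2 w).natDegree) w hw le_rfl hev
  have P3' : ∀ w : MvPolynomial (Fin 3) R, w.IsHomogeneous n →
      MvPolynomial.aeval ![a, b, c] w = 0 →
      ∃ p q : MvPolynomial (Fin 3) R, p.IsHomogeneous (n - 1) ∧ q.IsHomogeneous (n - 1) ∧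
        w = f * p + g * q := by
    intro w hw hev
    obtain ⟨p, q, hpq⟩ := P3 w hw hev
    refine ⟨homogeneousComponent (n - 1) p, homogeneousComponent (n - 1) q,
      homogeneousComponent_isHomogeneous _ _, homogeneousComponent_isHomogeneous _ _, ?_⟩
    have hwcomp : homogeneousComponent n w = w := by
      rw [homogeneousComponent_of_mem ((mem_homogeneousSubmodule _ _).mpr hw), if_pos rfl]
    calc w = homogeneousComponent n w := hwcomp.symm
    _ = homogeneousComponent n (f * p + g * q) := by rw [hpq]
    _ = f * homogeneousComponent (n - 1) p + g * homogeneousComponent (n - 1) q := by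
        rw [map_add]
        conv_lhs => rw [show n = (n - 1) + 1 from by omega]
        rw [homogComp_mul hfhom, homogComp_mul hghom]
  -- Injectivity of φ₃
  have hinj : Function.Injective φ₃ := by
    intro u1 u2 h12
    have e1 := (hφ₃ u1).2
    have e2 := (hφ₃ u2).2
    have e3 : ((φ₃ u1).2 : MvPolynomial (Fin 3) R) = ((φ₃ u2).2 : MvPolynomial (Fin 3) R) := by
      rw [h12]
    rw [e1, e2] at e3
    have e4 : f * ((u1 : MvPolynomial (Fin 3) R) - (u2 : MvPolynomial (Fin 3) R)) = 0 := by
      linear_combination e3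
    have := hfnzd _ e4
    apply Subtype.ext
    linear_combination this
  -- Exactness at the middle
  have hex32 : Function.Exact φ₃ φ₂ := by
    intro v
    constructor
    · intro hv
      have hcoe : f * (v.1 : MvPolynomial (Fin 3) R) + g * (v.2 : MvPolynomial (Fin 3) R) = 0 := by
        have h0 := hφ₂ v
        rw [hv] at h0
        simpa using h0.symm
      obtain ⟨u, hu1, hu2⟩ := CF2 _ _ hcoe
      set u' := homogeneousComponent (n - 2) u with hu'
      have hn2 : n - 1 = (n - 2) + 1 := by omega
      have h1 : homogeneousComponent (n - 1) (v.1 : MvPolynomial (Fin 3) R)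
          = (v.1 : MvPolynomial (Fin 3) R) := by
        rw [homogeneousComponent_of_mem v.1.2, if_pos rfl]
      have h2 : homogeneousComponent (n - 1) (v.2 : MvPolynomial (Fin 3) R)
          = (v.2 : MvPolynomial (Fin 3) R) := by
        rw [homogeneousComponent_of_mem v.2.2, if_pos rfl]
      have hgu : g * u' = (v.1 : MvPolynomial (Fin 3) R) := by
        calc g * u' = homogeneousComponent ((n - 2) + 1) (g * u) :=
              (homogComp_mul hghom _ _).symm
        _ = homogeneousComponent (n - 1) (v.1 : MvPolynomial (Fin 3) R) := by
              rw [← hn2, ← hu1]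
        _ = (v.1 : MvPolynomial (Fin 3) R) := h1
      have hfu : f * u' = -(v.2 : MvPolynomial (Fin 3) R) := by
        calc f * u' = homogeneousComponent ((n - 2) + 1) (f * u) :=
              (homogComp_mul hfhom _ _).symm
        _ = homogeneousComponent (n - 1) (-(v.2 : MvPolynomial (Fin 3) R)) := by
              rw [← hn2]; congr 1; linear_combination hu2
        _ = -(v.2 : MvPolynomial (Fin 3) R) := by rw [map_neg, h2]
      set U : homogeneousSubmodule (Fin 3) R (n - 2) :=
        ⟨-u', neg_mem ((mem_homogeneousSubmodule _ _).mpr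
          (homogeneousComponent_isHomogeneous _ _))⟩ with hU
      have hUcoe : (U : MvPolynomial (Fin 3) R) = -u' := rfl
      refine ⟨U, ?_⟩
      obtain ⟨h31, h32⟩ := hφ₃ U
      have eq1 : ((φ₃ U).1 : MvPolynomial (Fin 3) R) = (v.1 : MvPolynomial (Fin 3) R) := by
        rw [h31, hUcoe, ← hgu]; ring
      have eq2 : ((φ₃ U).2 : MvPolynomial (Fin 3) R) = (v.2 : MvPolynomial (Fin 3) R) := by
        rw [h32, hUcoe]
        have : -(f * u') = (v.2 : MvPolynomial (Fin 3) R) := by rw [hfu]; ring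
        rw [← this]; ring
      exact Prod.ext (Subtype.ext eq1) (Subtype.ext eq2)
    · rintro ⟨u, rfl⟩
      apply Subtype.ext
      obtain ⟨h31, h32⟩ := hφ₃ u
      rw [hφ₂ (φ₃ u), h31, h32]
      simpa using by ring
  -- Exactness at the right
  have hex21 : Function.Exact φ₂ ε := by
    intro w
    constructor
    · intro hw
      have hev : MvPolynomial.aeval ![a, b, c] (w : MvPolynomial (Fin 3) R) = 0 :=
        (hε w).symm.trans hw
      have hwhom : (w : MvPolynomial (Fin 3) R).IsHomogeneous n :=
        (mem_homogeneousSubmodule _ _).mp w.2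
      obtain ⟨p, q, hp, hq, hpq⟩ := P3' _ hwhom hev
      refine ⟨(⟨p, (mem_homogeneousSubmodule _ _).mpr hp⟩,
        ⟨q, (mem_homogeneousSubmodule _ _).mpr hq⟩), ?_⟩
      apply Subtype.ext
      rw [hφ₂ _]
      exact hpq.symm
    · rintro ⟨v, rfl⟩
      rw [hε _, hφ₂ v, map_add, map_mul, map_mul, hfa, hga, zero_mul, zero_mul, add_zero]
  -- range of ε
  have haI : a ∈ I := hI ▸ Ideal.subset_span (by simp)
  have hbI : b ∈ I := hI ▸ Ideal.subset_span (by simp)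
  have hcI : c ∈ I := hI ▸ Ideal.subset_span (by simp)
  have AV : ∀ w : MvPolynomial (Fin 3) R, w.IsHomogeneous n →
      MvPolynomial.aeval ![a, b, c] w ∈ I ^ n := by
    intro w hw
    rw [← MvPolynomial.support_sum_monomial_coeff w, map_sum]
    refine Submodule.sum_mem _ (fun d hd => ?_)
    rw [MvPolynomial.aeval_monomial]
    have hdeg : d 0 + d 1 + d 2 = n := by
      have h0 := hw (MvPolynomial.mem_support_iff.mp hd)
      change (Finsupp.weight (fun _ => 1)) d = n at h0
      rw [← Finsupp.degree_eq_weight_one] at h0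
      rw [← degree_fin3]
      exact h0
    have hprod : (d.prod fun i k => (![a, b, c] : Fin 3 → R) i ^ k) ∈ I ^ n := by
      rw [Finsupp.prod_fintype _ _ (fun i => pow_zero _), Fin.prod_univ_three, hv0, hv1, hv2]
      have h1 : a ^ (d 0) ∈ I ^ (d 0) := Ideal.pow_mem_pow haI _
      have h2 : b ^ (d 1) ∈ I ^ (d 1) := Ideal.pow_mem_pow hbI _
      have h3 : c ^ (d 2) ∈ I ^ (d 2) := Ideal.pow_mem_pow hcI _
      have h4 := Ideal.mul_mem_mul (Ideal.mul_mem_mul h1 h2) h3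
      rwa [← pow_add, ← pow_add, hdeg] at h4
    simpa [Algebra.algebraMap_self_apply] using Ideal.mul_mem_left _ _ hprod
  have JI : ∀ (k : ℕ) (r : R), r ∈ I ^ k →
      ∃ w : MvPolynomial (Fin 3) R, w.IsHomogeneous k ∧
        MvPolynomial.aeval ![a, b, c] w = r := by
    intro k
    induction k with
    | zero =>
      intro r _
      exact ⟨MvPolynomial.C r, isHomogeneous_C _ _, by simp⟩
    | succ k IH =>
      intro r hr
      rw [pow_succ] at hr
      refine Submodule.mul_induction_on hr ?_ ?_
      · intro m' hm' t ht
        obtain ⟨w, hw, hev⟩ := IH m' hm'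
        have ht' : t ∈ Ideal.span {a, b, c} := hI ▸ ht
        rw [Ideal.mem_span_insert] at ht'
        obtain ⟨r1, z1, hz1, hteq⟩ := ht'
        rw [Ideal.mem_span_pair] at hz1
        obtain ⟨r2, r3, hz⟩ := hz1
        refine ⟨w * (C r1 * X 0 + C r2 * X 1 + C r3 * X 2),
          hw.mul (((isHomogeneous_C_mul_X r1 0).add (isHomogeneous_C_mul_X r2 1)).add
            (isHomogeneous_C_mul_X r3 2)), ?_⟩
        rw [map_mul, hev]
        simp only [map_add, map_mul, MvPolynomial.aeval_C, MvPolynomial.aeval_X,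
          Algebra.algebraMap_self_apply]
        rw [hv0, hv1, hv2, hteq, ← hz]
        ring
      · intro p1 p2 h1 h2
        obtain ⟨w1, hw1, he1⟩ := h1
        obtain ⟨w2, hw2, he2⟩ := h2
        exact ⟨w1 + w2, hw1.add hw2, by rw [map_add, he1, he2]⟩
  have hrng : LinearMap.range ε = (I ^ n : Ideal R) := by
    apply le_antisymm
    · rintro r ⟨w, rfl⟩
      rw [hε w]
      exact AV _ ((mem_homogeneousSubmodule _ _).mp w.2)
    · intro r hr
      obtain ⟨w, hw, hev⟩ := JI n r hr
      exact ⟨⟨w, (mem_homogeneousSubmodule _ _).mpr hw⟩, by rw [hε]; exact hev⟩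
  -- coefficients of f and g lie in the maximal ideal
  have hxm : x ∈ maximalIdeal R := hsop ▸ Ideal.le_radical (Ideal.subset_span (by simp))
  have hym : y ∈ maximalIdeal R := hsop ▸ Ideal.le_radical (Ideal.subset_span (by simp))
  have hzm : z ∈ maximalIdeal R := hsop ▸ Ideal.le_radical (Ideal.subset_span (by simp))
  have hpowm : ∀ (t : R), t ∈ maximalIdeal R → ∀ k : ℕ, 0 < k → t ^ k ∈ maximalIdeal R := by
    intro t ht k hk
    have h0 : t ^ k = t ^ (k - 1) * t := by
      rw [← pow_succ]; congr 1; omega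
    rw [h0]
    exact Ideal.mul_mem_left _ _ ht
  have hfco : ∀ d, MvPolynomial.coeff d f ∈ maximalIdeal R := by
    rw [hf]
    exact coeff_lin_mem (hpowm x hxm _ hα) (hpowm y hym _ hβ) (hpowm z hzm _ hγ)
  have hgco : ∀ d, MvPolynomial.coeff d g ∈ maximalIdeal R := by
    rw [hg]
    exact coeff_lin_mem (hpowm y hym _ hβ') (hpowm z hzm _ hγ') (hpowm x hxm _ hα')
  have hm3 : LinearMap.range φ₃ ≤ (maximalIdeal R) • ⊤ := by
    rintro v ⟨u, rfl⟩
    obtain ⟨h31, h32⟩ := hφ₃ u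
    have hc1 : (φ₃ u).1 ∈ (maximalIdeal R) •
        (⊤ : Submodule R (homogeneousSubmodule (Fin 3) R (n - 1))) := by
      refine mem_smul_top_of_coeff _ (fun d => ?_)
      rw [h31, MvPolynomial.coeff_neg]
      exact neg_mem (coeff_mul_mem hgco _ _)
    have hc2 : (φ₃ u).2 ∈ (maximalIdeal R) •
        (⊤ : Submodule R (homogeneousSubmodule (Fin 3) R (n - 1))) := by
      refine mem_smul_top_of_coeff _ (fun d => ?_)
      rw [h32]
      exact coeff_mul_mem hfco _ _
    have := prod_mem_smul hc1 hc2
    simpa using this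
  have hm2 : LinearMap.range φ₂ ≤ (maximalIdeal R) • ⊤ := by
    rintro w ⟨v, rfl⟩
    refine mem_smul_top_of_coeff _ (fun d => ?_)
    rw [hφ₂ v, MvPolynomial.coeff_add]
    exact add_mem (coeff_mul_mem hfco _ _) (coeff_mul_mem hgco _ _)
  refine ⟨hinj, hex32, hex21, hrng, hm3, hm2, ?_⟩
  intro w hw
  have h0 : ε w = 0 := hw
  have h1 := (hex21 w).mp h0
  obtain ⟨v, hv⟩ := h1
  rw [← hv]
  exact hm2 ⟨v, rfl⟩
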